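/- For all integers n ≥ 1 and k ≥ 1, the following identity holds in ℚ: Σ_{p=1}^{k} ((−1)^{p+1}/p) · Σ ∏_{m=1}^{p} (binom(n·i_m, i_m)/((n−1)·i_m + 1)) = binom(nk, k)/(nk), where the inner sum ranges over all compositions (i_1, …, i_p) of k into p positive parts (i_m ≥ 1, i_1 + ⋯ + i_p = k). -/

import Mathlib

namespace FussCatalanAux

open Finset

/-- The Fuss–Catalan numbers as rationals. -/
def a (n i : ℕ) : ℚ := (Nat.choose (n * i) i : ℚ) / (((n : ℚ) - 1) * i + 1)

/-- Sum over compositions of `k` of length `p` of products of `a`. -/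
def S (n p k : ℕ) : ℚ :=
  ∑ c ∈ Finset.univ.filter (fun c : Composition k => c.length = p),
    (c.blocks.map (a n)).prod

/-- The left-hand side of the theorem. -/
def L (n k : ℕ) : ℚ := ∑ p ∈ Finset.Icc 1 k, ((-1 : ℚ) ^ (p + 1) / p) * S n p k

@[simp] lemma a_zero (n : ℕ) : a n 0 = 1 := by simp [a]

lemma blocks_eq_nil (c : Composition 0) : c.blocks = [] := by
  rcases c with ⟨bl, pos, sum⟩
  cases bl with
  | nil => rfl
  | cons x t =>
    exfalso
    have hx : 0 < x := pos (List.mem_cons_self)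
    simp only [List.sum_cons] at sum
    omega

lemma filter_eq_empty_of_lt (p k : ℕ) (hp : k < p) :
    (Finset.univ.filter (fun c : Composition k => c.length = p)) = ∅ := by
  ext c
  simp only [mem_filter, mem_univ, true_and, Finset.notMem_empty, iff_false]
  intro h
  have := c.length_le
  omega

lemma S_zero_of_pos (n p k : ℕ) (hp : k < p) : S n p k = 0 := by
  rw [S, filter_eq_empty_of_lt p k hp, Finset.sum_empty]

lemma S_length_zero (n k : ℕ) (hk : 1 ≤ k) : S n 0 k = 0 := by
  rw [S]
  convert Finset.sum_empty
  ext c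
  simp only [mem_filter, mem_univ, true_and, Finset.notMem_empty, iff_false]
  intro h
  have h2 := c.blocks_sum
  have : c.blocks = [] := List.length_eq_zero_iff.mp h
  rw [this] at h2
  simp at h2
  omega

lemma S_self_zero (n p : ℕ) (hp : 1 ≤ p) : S n p 0 = 0 := by
  exact S_zero_of_pos n p 0 hp

lemma univ_comp_zero : (Finset.univ : Finset (Composition 0)) = {⟨[], by simp, by simp⟩} := by
  ext c
  simp only [mem_univ, Finset.mem_singleton, true_iff]
  ext1
  exact blocks_eq_nil c

lemma S_zero_zero (n : ℕ) : S n 0 0 = 1 := by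
  rw [S, univ_comp_zero]
  simp [Finset.filter_singleton]

def consC (k i : ℕ) (h1 : 1 ≤ i) (h2 : i ≤ k) (c : Composition (k - i)) : Composition k where
  blocks := i :: c.blocks
  blocks_pos := by
    intro j hj
    rcases List.mem_cons.mp hj with h | h
    · omega
    · exact c.blocks_pos h
  blocks_sum := by
    simp only [List.sum_cons, c.blocks_sum]
    omega

def tailC (k : ℕ) (c : Composition k) : Composition (k - c.blocks.headI) where
  blocks := c.blocks.tail
  blocks_pos := fun h => c.blocks_pos (List.mem_of_mem_tail h)
  blocks_sum := by
    have h := c.blocks_sum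
    rcases hb : c.blocks with _ | ⟨x, t⟩
    · simp [hb] at h ⊢; omega
    · rw [hb] at h
      simp only [List.sum_cons] at h
      simp only [List.tail_cons, List.headI_cons]
      omega


lemma headI_mem {l : List ℕ} (h : l ≠ []) : l.headI ∈ l := by
  cases l with
  | nil => exact absurd rfl h
  | cons x t => exact List.mem_cons_self

lemma headI_cons_tail (l : List ℕ) (h : l ≠ []) : l.headI :: l.tail = l := by
  cases l with
  | nil => exact absurd rfl h
  | cons x t => rfl

lemma blocks_ne_nil {k p : ℕ} (c : Composition k) (hc : c.length = p + 1) : c.blocks ≠ [] := by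
  intro h
  have : c.blocks.length = p + 1 := hc
  rw [h] at this
  simp at this

lemma cons_lemma (n : ℕ) (w : ℕ → ℚ) (p k : ℕ) :
    ∑ c ∈ Finset.univ.filter (fun c : Composition k => c.length = p + 1),
      w c.blocks.headI * (c.blocks.map (a n)).prod
    = ∑ i ∈ Finset.Icc 1 k, w i * (a n i * S n p (k - i)) := by
  have : ∀ i ∈ Finset.Icc 1 k, w i * (a n i * S n p (k - i)) =
      ∑ c ∈ Finset.univ.filter (fun c : Composition (k - i) => c.length = p),
        w i * (a n i * (c.blocks.map (a n)).prod) := by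
    intro i _
    simp only [S, Finset.mul_sum]
  rw [Finset.sum_congr rfl this, Finset.sum_sigma']
  refine Finset.sum_bij' (fun c hc => ?_) (fun x hx => ?_) ?_ ?_ ?_ ?_ ?_
  case refine_1 =>
    -- from composition to sigma
    exact ⟨c.blocks.headI, tailC k c⟩
  case refine_2 =>
    -- from sigma to composition
    simp only [Finset.mem_sigma, Finset.mem_Icc, Finset.mem_filter] at hx
    exact consC k x.1 hx.1.1 hx.1.2 x.2
  case refine_3 =>
    intro c hc
    simp only [Finset.mem_filter, Finset.mem_univ, true_and] at hc
    have hne : c.blocks ≠ [] := blocks_ne_nil c hc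
    simp only [Finset.mem_sigma, Finset.mem_Icc, Finset.mem_filter, Finset.mem_univ, true_and]
    refine ⟨⟨?_, ?_⟩, ?_⟩
    · exact c.blocks_pos (headI_mem hne)
    · have h := c.blocks_sum
      have := headI_mem hne
      calc c.blocks.headI ≤ c.blocks.sum := List.single_le_sum (fun x _ => Nat.zero_le x) _ this
      _ = k := h
    · show c.blocks.tail.length = p
      have : c.blocks.length = p + 1 := hc
      rw [List.length_tail, this]
      omega
  case refine_4 =>
    intro x hx
    simp only [Finset.mem_sigma, Finset.mem_Icc, Finset.mem_filter, Finset.mem_univ, true_and] at hx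
    simp only [Finset.mem_filter, Finset.mem_univ, true_and]
    show (x.1 :: x.2.blocks).length = p + 1
    simp [hx.2]
  case refine_5 =>
    intro c hc
    simp only [Finset.mem_filter, Finset.mem_univ, true_and] at hc
    have hne : c.blocks ≠ [] := blocks_ne_nil c hc
    ext1
    show c.blocks.headI :: c.blocks.tail = c.blocks
    exact headI_cons_tail c.blocks hne
  case refine_6 =>
    intro x hx
    rfl
  case refine_7 =>
    intro c hc
    simp only [Finset.mem_filter, Finset.mem_univ, true_and] at hc
    have hne : c.blocks ≠ [] := blocks_ne_nil c hc
    show w c.blocks.headI * (c.blocks.map (a n)).prod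
      = w c.blocks.headI * (a n c.blocks.headI * ((tailC k c).blocks.map (a n)).prod)
    congr 1
    conv_lhs => rw [← headI_cons_tail c.blocks hne]
    simp [tailC]

lemma S_rec (n p k : ℕ) :
    S n (p + 1) k = ∑ i ∈ Finset.Icc 1 k, a n i * S n p (k - i) := by
  have := cons_lemma n (fun _ => 1) p k
  simpa [S] using this

def rotC {k : ℕ} (m : ℕ) (c : Composition k) : Composition k where
  blocks := c.blocks.rotate m
  blocks_pos := fun h => c.blocks_pos (List.mem_rotate.mp h)
  blocks_sum := by rw [(c.blocks.rotate_perm m).sum_eq]; exact c.blocks_sum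

lemma rotC_length {k : ℕ} (m : ℕ) (c : Composition k) : (rotC m c).length = c.length :=
  c.blocks.length_rotate m

lemma rotC_rotC {k : ℕ} (m m' : ℕ) (c : Composition k) (h : m + m' = c.length) :
    rotC m' (rotC m c) = c := by
  ext1
  show (c.blocks.rotate m).rotate m' = c.blocks
  rw [List.rotate_rotate, h]
  exact c.blocks.rotate_length

lemma headI_eq_iget (l : List ℕ) : l.headI = l.head?.iget := by cases l <;> rfl

lemma headI_rotate {l : List ℕ} {m : ℕ} (h : m < l.length) :
    (l.rotate m).headI = l.getD m 0 := by
  rw [headI_eq_iget, List.head?_rotate h, List.getElem?_eq_getElem h, List.getD_eq_getElem l 0 h]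

lemma sum_getD (l : List ℕ) : ∑ m ∈ Finset.range l.length, l.getD m 0 = l.sum := by
  induction l with
  | nil => simp
  | cons x t ih =>
    rw [List.length_cons, Finset.sum_range_succ']
    simp only [List.getD_cons_succ, List.getD_cons_zero, List.sum_cons, ih]
    omega

/-- The rotation lemma. -/
lemma rotation_lemma (n p k : ℕ) (hp : 1 ≤ p) :
    (p : ℚ) * ∑ c ∈ Finset.univ.filter (fun c : Composition k => c.length = p),
      (c.blocks.headI : ℚ) * (c.blocks.map (a n)).prod
    = (k : ℚ) * S n p k := by
  have prodinv : ∀ (m : ℕ) (c : Composition k),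
      ((rotC m c).blocks.map (a n)).prod = (c.blocks.map (a n)).prod := by
    intro m c
    exact (((c.blocks.rotate_perm m).map (a n)).prod_eq)
  -- step 1 : for each m < p, the sum equals the m-th-entry-weighted sum
  have step1 : ∀ m, m < p →
      ∑ c ∈ Finset.univ.filter (fun c : Composition k => c.length = p),
        (c.blocks.getD m 0 : ℚ) * (c.blocks.map (a n)).prod
      = ∑ c ∈ Finset.univ.filter (fun c : Composition k => c.length = p),
        (c.blocks.headI : ℚ) * (c.blocks.map (a n)).prod := by
    intro m hm
    refine Finset.sum_nbij' (rotC m) (rotC (p - m)) ?_ ?_ ?_ ?_ ?_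
    · intro c hc
      simp only [Finset.mem_filter, Finset.mem_univ, true_and] at hc ⊢
      rw [rotC_length]; exact hc
    · intro c hc
      simp only [Finset.mem_filter, Finset.mem_univ, true_and] at hc ⊢
      rw [rotC_length]; exact hc
    · intro c hc
      simp only [Finset.mem_filter, Finset.mem_univ, true_and] at hc
      exact rotC_rotC m (p - m) c (by rw [hc]; omega)
    · intro c hc
      simp only [Finset.mem_filter, Finset.mem_univ, true_and] at hc
      exact rotC_rotC (p - m) m c (by rw [hc]; omega)
    · intro c hc
      simp only [Finset.mem_filter, Finset.mem_univ, true_and] at hc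
      rw [prodinv]
      congr 1
      show ((c.blocks.getD m 0 : ℕ) : ℚ) = ((c.blocks.rotate m).headI : ℚ)
      rw [headI_rotate (by rw [Composition.blocks_length, hc]; exact hm)]
  -- step 2: sum over m
  calc (p : ℚ) * ∑ c ∈ Finset.univ.filter (fun c : Composition k => c.length = p),
      (c.blocks.headI : ℚ) * (c.blocks.map (a n)).prod
      = ∑ m ∈ Finset.range p, ∑ c ∈ Finset.univ.filter
          (fun c : Composition k => c.length = p),
          (c.blocks.getD m 0 : ℚ) * (c.blocks.map (a n)).prod := by
        rw [show ((p : ℚ) * ∑ c ∈ Finset.univ.filter (fun c : Composition k => c.length = p),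
            (c.blocks.headI : ℚ) * (c.blocks.map (a n)).prod)
            = ∑ _m ∈ Finset.range p, ∑ c ∈ Finset.univ.filter
              (fun c : Composition k => c.length = p),
              (c.blocks.headI : ℚ) * (c.blocks.map (a n)).prod from by
          rw [Finset.sum_const, Finset.card_range, nsmul_eq_mul]]
        exact Finset.sum_congr rfl (fun m hm => (step1 m (Finset.mem_range.mp hm)).symm)
    _ = ∑ c ∈ Finset.univ.filter (fun c : Composition k => c.length = p),
          (∑ m ∈ Finset.range p, (c.blocks.getD m 0 : ℚ)) * (c.blocks.map (a n)).prod := by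
        rw [Finset.sum_comm]
        exact Finset.sum_congr rfl (fun c _ => by rw [Finset.sum_mul])
    _ = (k : ℚ) * S n p k := by
        rw [S, Finset.mul_sum]
        refine Finset.sum_congr rfl (fun c hc => ?_)
        simp only [Finset.mem_filter, Finset.mem_univ, true_and] at hc
        congr 1
        rw [← Nat.cast_sum]
        have : ∑ m ∈ Finset.range p, c.blocks.getD m 0 = c.blocks.sum := by
          rw [← hc]; exact sum_getD c.blocks
        rw [this, c.blocks_sum]



def E (n m : ℕ) : ℚ := ∑ q ∈ Finset.range (m + 1), (-1 : ℚ) ^ q * S n q m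

lemma sum_Icc_shift (f : ℕ → ℚ) (i k : ℕ) (h : i ≤ k) :
    ∑ j ∈ Finset.Icc i k, f j = ∑ m ∈ Finset.range (k + 1 - i), f (i + m) := by
  refine Finset.sum_nbij' (fun j => j - i) (fun m => i + m) ?_ ?_ ?_ ?_ ?_ <;>
    simp only [Finset.mem_Icc, Finset.mem_range]
  · intro a ha; omega
  · intro a ha; omega
  · intro a ha; omega
  · intro a ha; omega
  · intro a ha; congr 1; omega

lemma inner_sum_eq (n q t : ℕ) (hq : q ≤ t) :
    ∑ m ∈ Finset.Icc q t, a n (t - m) * S n q m = S n q t + S n (q + 1) t := by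
  have hext : ∑ m ∈ Finset.Icc q t, a n (t - m) * S n q m
      = ∑ m ∈ Finset.range (t + 1), a n (t - m) * S n q m := by
    refine Finset.sum_subset ?_ ?_
    · intro m hm
      simp only [Finset.mem_Icc] at hm
      simp only [Finset.mem_range]
      omega
    · intro m hm hnm
      simp only [Finset.mem_range] at hm
      simp only [Finset.mem_Icc] at hnm
      rw [S_zero_of_pos n q m (by omega), mul_zero]
  rw [hext, Finset.sum_range_succ, Nat.sub_self, a_zero, one_mul, add_comm]
  congr 1
  rcases Nat.eq_zero_or_pos t with ht | ht
  · subst ht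
    simp [S_self_zero]
  · rw [S_rec, sum_Icc_shift (fun i => a n i * S n q (t - i)) 1 t ht]
    have h1 : t + 1 - 1 = t := by omega
    rw [h1]
    rw [← Finset.sum_range_reflect (fun m => a n (t - m) * S n q m) t]
    refine Finset.sum_congr rfl (fun m hm => ?_)
    simp only [Finset.mem_range] at hm
    have e1 : t - (t - 1 - m) = 1 + m := by omega
    have e2 : t - (1 + m) = t - 1 - m := by omega
    rw [e1, e2]

lemma M_eq (n t : ℕ) :
    ∑ m ∈ Finset.range (t + 1), a n (t - m) * E n m = if t = 0 then 1 else 0 := by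
  simp only [E, Finset.mul_sum]
  rw [Finset.sum_comm' (s' := fun q => Finset.Icc q t) (t' := Finset.range (t + 1))
    (by intro m q; simp only [Finset.mem_Icc, Finset.mem_range]; omega)]
  have inner : ∀ q ∈ Finset.range (t + 1),
      ∑ m ∈ Finset.Icc q t, a n (t - m) * ((-1 : ℚ) ^ q * S n q m)
      = (-1 : ℚ) ^ q * S n q t - (-1 : ℚ) ^ (q + 1) * S n (q + 1) t := by
    intro q hq
    simp only [Finset.mem_range] at hq
    have : ∑ m ∈ Finset.Icc q t, a n (t - m) * ((-1 : ℚ) ^ q * S n q m)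
        = (-1 : ℚ) ^ q * ∑ m ∈ Finset.Icc q t, a n (t - m) * S n q m := by
      rw [Finset.mul_sum]
      exact Finset.sum_congr rfl (fun m _ => by ring)
    rw [this, inner_sum_eq n q t (by omega)]
    ring
  rw [Finset.sum_congr rfl inner, Finset.sum_range_sub' (fun q => (-1 : ℚ) ^ q * S n q t)]
  rw [S_zero_of_pos n (t + 1) t (by omega), mul_zero, sub_zero, pow_zero, one_mul]
  rcases Nat.eq_zero_or_pos t with ht | ht
  · subst ht
    simp [S_zero_zero]
  · rw [S_length_zero n t ht, if_neg (by omega)]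

lemma psum (n m k : ℕ) (hm : m < k) :
    ∑ p ∈ Finset.Icc 1 k, (-1 : ℚ) ^ (p + 1) * S n (p - 1) m = E n m := by
  rw [sum_Icc_shift (fun p => (-1 : ℚ) ^ (p + 1) * S n (p - 1) m) 1 k (by omega)]
  have h1 : k + 1 - 1 = k := by omega
  rw [h1, E]
  have step : ∀ q ∈ Finset.range k, (-1 : ℚ) ^ (1 + q + 1) * S n (1 + q - 1) m
      = (-1 : ℚ) ^ q * S n q m := by
    intro q _
    have e1 : 1 + q - 1 = q := by omega
    have e2 : 1 + q + 1 = q + 2 := by omega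
    rw [e1, e2, pow_add]
    ring
  rw [Finset.sum_congr rfl step]
  refine (Finset.sum_subset ?_ ?_).symm
  · intro q hq
    simp only [Finset.mem_range] at hq ⊢
    omega
  · intro q hq hnq
    simp only [Finset.mem_range] at hq hnq
    rw [S_zero_of_pos n q m (by omega), mul_zero]

lemma jL (n j : ℕ) (hj : 1 ≤ j) :
    (j : ℚ) * L n j = ∑ p ∈ Finset.Icc 1 j, (-1 : ℚ) ^ (p + 1) *
      ∑ i ∈ Finset.Icc 1 j, (i : ℚ) * (a n i * S n (p - 1) (j - i)) := by
  rw [L, Finset.mul_sum]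
  refine Finset.sum_congr rfl (fun p hp => ?_)
  simp only [Finset.mem_Icc] at hp
  obtain ⟨q, rfl⟩ : ∃ q, p = q + 1 := ⟨p - 1, by omega⟩
  have hrot := rotation_lemma n (q + 1) j (by omega)
  have hcons := cons_lemma n (fun i => (i : ℚ)) q j
  simp only [Nat.add_sub_cancel]
  rw [← hcons]
  have hne : ((q : ℚ) + 1) ≠ 0 := by positivity
  push_cast at hrot ⊢
  field_simp
  linear_combination (-1 : ℚ) * hrot

/-- The log-derivative recurrence for `L`. -/
lemma A_rec (n k : ℕ) (hk : 1 ≤ k) :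
    ∑ j ∈ Finset.Icc 1 k, (j : ℚ) * L n j * a n (k - j) = (k : ℚ) * a n k := by
  have step1 : ∀ j ∈ Finset.Icc 1 k, (j : ℚ) * L n j * a n (k - j)
      = ∑ i ∈ Finset.Icc 1 j, (i : ℚ) * a n i * (a n (k - j) * E n (j - i)) := by
    intro j hj
    simp only [Finset.mem_Icc] at hj
    rw [jL n j hj.1]
    have hext : ∑ p ∈ Finset.Icc 1 j, (-1 : ℚ) ^ (p + 1) *
        ∑ i ∈ Finset.Icc 1 j, (i : ℚ) * (a n i * S n (p - 1) (j - i))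
        = ∑ p ∈ Finset.Icc 1 k, (-1 : ℚ) ^ (p + 1) *
        ∑ i ∈ Finset.Icc 1 j, (i : ℚ) * (a n i * S n (p - 1) (j - i)) := by
      refine Finset.sum_subset ?_ ?_
      · intro p hp
        simp only [Finset.mem_Icc] at hp ⊢
        omega
      · intro p hp hnp
        simp only [Finset.mem_Icc] at hp hnp
        have hz : ∀ i ∈ Finset.Icc 1 j, (i : ℚ) * (a n i * S n (p - 1) (j - i)) = 0 := by
          intro i hi
          simp only [Finset.mem_Icc] at hi
          rw [S_zero_of_pos n (p - 1) (j - i) (by omega), mul_zero, mul_zero]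
        rw [Finset.sum_congr rfl hz, Finset.sum_const_zero, mul_zero]
    rw [hext]
    have swap : ∑ p ∈ Finset.Icc 1 k, (-1 : ℚ) ^ (p + 1) *
        ∑ i ∈ Finset.Icc 1 j, (i : ℚ) * (a n i * S n (p - 1) (j - i))
        = ∑ i ∈ Finset.Icc 1 j, (i : ℚ) * a n i *
          ∑ p ∈ Finset.Icc 1 k, (-1 : ℚ) ^ (p + 1) * S n (p - 1) (j - i) := by
      simp only [Finset.mul_sum]
      rw [Finset.sum_comm]
      refine Finset.sum_congr rfl (fun i _ => Finset.sum_congr rfl (fun p _ => by ring))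
    rw [swap, Finset.sum_mul]
    refine Finset.sum_congr rfl (fun i hi => ?_)
    simp only [Finset.mem_Icc] at hi
    rw [psum n (j - i) k (by omega)]
    ring
  rw [Finset.sum_congr rfl step1]
  rw [Finset.sum_comm' (s' := fun i => Finset.Icc i k) (t' := Finset.Icc 1 k)
    (by intro j i; simp only [Finset.mem_Icc]; omega)]
  have step3 : ∀ i ∈ Finset.Icc 1 k,
      ∑ j ∈ Finset.Icc i k, (i : ℚ) * a n i * (a n (k - j) * E n (j - i))
      = (i : ℚ) * a n i * (if k - i = 0 then 1 else 0) := by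
    intro i hi
    simp only [Finset.mem_Icc] at hi
    rw [sum_Icc_shift (fun j => (i : ℚ) * a n i * (a n (k - j) * E n (j - i))) i k hi.2]
    have h1 : k + 1 - i = (k - i) + 1 := by omega
    rw [h1, ← M_eq n (k - i), Finset.mul_sum]
    refine Finset.sum_congr rfl (fun m hm => ?_)
    simp only [Finset.mem_range] at hm
    have e1 : k - (i + m) = k - i - m := by omega
    have e2 : i + m - i = m := by omega
    rw [e1, e2]
  rw [Finset.sum_congr rfl step3]
  rw [Finset.sum_eq_single_of_mem k (by simp only [Finset.mem_Icc]; omega)]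
  · rw [Nat.sub_self, if_pos rfl, mul_one]
  · intro i hi hne
    simp only [Finset.mem_Icc] at hi
    rw [if_neg (by omega), mul_zero]

/-! ### The arithmetic side -/

/-- `f n x j` is the coefficient of `x^k` in `F^x` where `F = 1 + X F^n`. -/
def f (n : ℕ) : ℕ → ℕ → ℚ
  | _, 0 => 1
  | x, (j+1) => (Nat.choose (x + n * (j+1)) (j+1) : ℚ)
      - n * (Nat.choose (x + n * (j+1) - 1) j : ℚ)

def d (n m : ℕ) : ℚ := (Nat.choose (n * m) m : ℚ)

lemma f_pascal (n x j : ℕ) (hn : 1 ≤ n) :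
    f n (x + 1) (j + 1) = f n x (j + 1) + f n (x + n) j := by
  cases j with
  | zero =>
    show ((Nat.choose (x + 1 + n * 1) 1 : ℚ) - n * (Nat.choose (x + 1 + n * 1 - 1) 0 : ℚ))
      = ((Nat.choose (x + n * 1) 1 : ℚ) - n * (Nat.choose (x + n * 1 - 1) 0 : ℚ)) + 1
    simp only [mul_one, Nat.choose_one_right, Nat.choose_zero_right, Nat.cast_one]
    push_cast
    ring
  | succ j' =>
    show ((Nat.choose (x + 1 + n * (j' + 2)) (j' + 2) : ℚ)
        - n * (Nat.choose (x + 1 + n * (j' + 2) - 1) (j' + 1) : ℚ))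
      = ((Nat.choose (x + n * (j' + 2)) (j' + 2) : ℚ)
        - n * (Nat.choose (x + n * (j' + 2) - 1) (j' + 1) : ℚ))
      + ((Nat.choose (x + n + n * (j' + 1)) (j' + 1) : ℚ)
        - n * (Nat.choose (x + n + n * (j' + 1) - 1) j' : ℚ))
    have hpos : 1 ≤ n * (j' + 2) := Nat.mul_pos (by omega) (by omega)
    have e0 : x + n + n * (j' + 1) = x + n * (j' + 2) := by ring
    have e1 : x + 1 + n * (j' + 2) - 1 = x + n * (j' + 2) := by omega
    rw [e0, e1]
    have hm : x + n * (j' + 2) = (x + n * (j' + 2) - 1) + 1 := by omega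
    have p1 : (Nat.choose (x + 1 + n * (j' + 2)) (j' + 2) : ℚ)
        = (Nat.choose (x + n * (j' + 2)) (j' + 1) : ℚ)
          + (Nat.choose (x + n * (j' + 2)) (j' + 2) : ℚ) := by
      have e : x + 1 + n * (j' + 2) = (x + n * (j' + 2)) + 1 := by ring
      rw [e, Nat.choose_succ_succ' (x + n * (j' + 2)) (j' + 1)]
      push_cast; ring
    have p2 : (Nat.choose (x + n * (j' + 2)) (j' + 1) : ℚ)
        = (Nat.choose (x + n * (j' + 2) - 1) j' : ℚ)
          + (Nat.choose (x + n * (j' + 2) - 1) (j' + 1) : ℚ) := by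
      rw [hm, Nat.choose_succ_succ' (x + n * (j' + 2) - 1) j']
      push_cast; ring
    rw [p1]
    nth_rewrite 2 [p2]
    ring

lemma f_zero (n j : ℕ) (hn : 1 ≤ n) (hj : 1 ≤ j) : f n 0 j = 0 := by
  obtain ⟨j', rfl⟩ : ∃ j', j = j' + 1 := ⟨j - 1, by omega⟩
  show (Nat.choose (0 + n * (j' + 1)) (j' + 1) : ℚ)
      - n * (Nat.choose (0 + n * (j' + 1) - 1) j' : ℚ) = 0
  have h1 : 1 ≤ n * (j' + 1) := Nat.mul_pos (by omega) (by omega)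
  have key := Nat.add_one_mul_choose_eq (n * (j' + 1) - 1) j'
  rw [Nat.sub_add_cancel h1] at key
  have keyQ : ((n * (j' + 1) : ℕ) : ℚ) * (Nat.choose (n * (j' + 1) - 1) j' : ℚ)
      = (Nat.choose (n * (j' + 1)) (j' + 1) : ℚ) * ((j' : ℚ) + 1) := by
    exact_mod_cast congrArg (fun t : ℕ => (t : ℚ)) key
  have hj1 : ((j' : ℚ) + 1) ≠ 0 := by positivity
  rw [zero_add]
  have hC : (Nat.choose (n * (j' + 1)) (j' + 1) : ℚ)
      = n * (Nat.choose (n * (j' + 1) - 1) j' : ℚ) := by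
    have h2 : (Nat.choose (n * (j' + 1)) (j' + 1) : ℚ) * ((j' : ℚ) + 1)
        = ((n : ℚ) * (Nat.choose (n * (j' + 1) - 1) j' : ℚ)) * ((j' : ℚ) + 1) := by
      push_cast at keyQ
      linear_combination -keyQ
    exact mul_right_cancel₀ hj1 h2
  rw [hC]
  ring

lemma f_one (n j : ℕ) (hn : 1 ≤ n) : f n 1 j = a n j := by
  cases j with
  | zero => show (1 : ℚ) = a n 0; simp [a]
  | succ j' =>
    show (Nat.choose (1 + n * (j' + 1)) (j' + 1) : ℚ)
      - n * (Nat.choose (1 + n * (j' + 1) - 1) j' : ℚ) = a n (j' + 1)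
    have h1 : 1 + n * (j' + 1) - 1 = n * (j' + 1) := by omega
    rw [h1]
    have p1 : (Nat.choose (1 + n * (j' + 1)) (j' + 1) : ℚ)
        = (Nat.choose (n * (j' + 1)) j' : ℚ) + (Nat.choose (n * (j' + 1)) (j' + 1) : ℚ) := by
      have e : 1 + n * (j' + 1) = (n * (j' + 1)) + 1 := by ring
      rw [e, Nat.choose_succ_succ' (n * (j' + 1)) j']
      push_cast; ring
    have key := Nat.choose_succ_right_eq (n * (j' + 1)) j'
    have hnJ : n * (j' + 1) = (n - 1) * (j' + 1) + (j' + 1) := by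
      obtain ⟨m, rfl⟩ : ∃ m, n = m + 1 := ⟨n - 1, by omega⟩
      simp [Nat.add_sub_cancel, Nat.succ_mul]
    have hsub : n * (j' + 1) - j' = (n - 1) * (j' + 1) + 1 := by omega
    rw [hsub] at key
    -- key : C(nJ, j'+1) * (j'+1) = C(nJ, j') * ((n-1)(j'+1) + 1)  in ℕ
    have keyQ : (Nat.choose (n * (j' + 1)) (j' + 1) : ℚ) * ((j' : ℚ) + 1)
        = (Nat.choose (n * (j' + 1)) j' : ℚ) * (((n : ℚ) - 1) * ((j' : ℚ) + 1) + 1) := by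
      have h := congrArg (fun t : ℕ => (t : ℚ)) key
      push_cast [Nat.cast_sub hn] at h
      linear_combination h
    have hn1 : (1 : ℚ) ≤ (n : ℚ) := by exact_mod_cast hn
    have hge : (0 : ℚ) ≤ ((n : ℚ) - 1) * ((j' : ℚ) + 1) :=
      mul_nonneg (by linarith) (by positivity)
    have hD : (((n : ℚ) - 1) * ((j' : ℚ) + 1) + 1) ≠ 0 := by
      have : (0 : ℚ) < ((n : ℚ) - 1) * ((j' : ℚ) + 1) + 1 := by linarith
      exact ne_of_gt this
    rw [a, p1]
    push_cast
    rw [eq_div_iff hD]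
    linear_combination ((n : ℚ) - 1) * keyQ

/-- The Rothe-type convolution identity. -/
lemma Bgen (n : ℕ) (hn : 1 ≤ n) :
    ∀ k x : ℕ, ∑ j ∈ Finset.range (k + 1), f n x j * d n (k - j)
      = (Nat.choose (x + n * k) k : ℚ) := by
  intro k
  induction k with
  | zero => intro x; simp [f, d]
  | succ k ihk =>
    intro x
    induction x with
    | zero =>
      rw [Finset.sum_eq_single_of_mem 0 (by simp)]
      · show f n 0 0 * d n (k + 1 - 0) = _
        simp only [f, Nat.sub_zero, one_mul, zero_add, d]
      · intro j hj hne
        rw [f_zero n j hn (by omega), zero_mul]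
    | succ x ihx =>
      have split : ∀ j ∈ Finset.range (k + 2), f n (x + 1) j * d n (k + 1 - j)
          = f n x j * d n (k + 1 - j)
            + (if j = 0 then 0 else f n (x + n) (j - 1) * d n (k + 1 - j)) := by
        intro j _
        cases j with
        | zero => simp [f]
        | succ j' =>
          rw [if_neg (by omega), f_pascal n x j' hn]
          simp only [Nat.add_sub_cancel]
          ring
      rw [Finset.sum_congr rfl split, Finset.sum_add_distrib, ihx]
      have shift : ∑ j ∈ Finset.range (k + 2),
          (if j = 0 then 0 else f n (x + n) (j - 1) * d n (k + 1 - j))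
          = ∑ j ∈ Finset.range (k + 1), f n (x + n) j * d n (k - j) := by
        rw [Finset.sum_range_succ']
        rw [if_pos rfl, add_zero]
        refine Finset.sum_congr rfl (fun i _ => ?_)
        rw [if_neg (by omega)]
        simp only [Nat.add_sub_cancel]
        congr 2
        omega
      rw [shift, ihk (x + n)]
      have e1 : x + n + n * k = x + n * (k + 1) := by ring
      rw [e1]
      have e2 : x + 1 + n * (k + 1) = (x + n * (k + 1)) + 1 := by ring
      rw [e2, Nat.choose_succ_succ' (x + n * (k + 1)) k]
      push_cast
      ring

lemma B_rec (n k : ℕ) (hn : 1 ≤ n) (hk : 1 ≤ k) :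
    ∑ j ∈ Finset.Icc 1 k, d n j * a n (k - j) = (n : ℚ) * k * a n k := by
  have hB := Bgen n hn k 1
  have hf1 : ∀ j ∈ Finset.range (k + 1), f n 1 j * d n (k - j) = a n j * d n (k - j) :=
    fun j _ => by rw [f_one n j hn]
  rw [Finset.sum_congr rfl hf1] at hB
  rw [← Finset.sum_range_reflect (fun j => a n j * d n (k - j)) (k + 1)] at hB
  have hrefl : ∀ j ∈ Finset.range (k + 1),
      a n (k + 1 - 1 - j) * d n (k - (k + 1 - 1 - j)) = a n (k - j) * d n j := by
    intro j hj
    simp only [Finset.mem_range] at hj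
    have e1 : k + 1 - 1 - j = k - j := by omega
    have e2 : k - (k - j) = j := by omega
    rw [e1, e2]
  rw [Finset.sum_congr rfl hrefl, Finset.sum_range_succ'] at hB
  -- hB : (∑ j ∈ range k, a n (k - (j+1)) * d n (j+1)) + a n k * d n 0 = C(1 + n*k, k)
  have hIcc : ∑ j ∈ Finset.Icc 1 k, d n j * a n (k - j)
      = ∑ j ∈ Finset.range k, a n (k - (j + 1)) * d n (j + 1) := by
    rw [sum_Icc_shift (fun j => d n j * a n (k - j)) 1 k hk]
    have e : k + 1 - 1 = k := by omega
    rw [e]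
    refine Finset.sum_congr rfl (fun m _ => ?_)
    have e2 : 1 + m = m + 1 := by omega
    rw [e2, mul_comm]
  rw [hIcc]
  have hd0 : d n 0 = 1 := by simp [d]
  rw [hd0, mul_one] at hB
  -- remains: C(1 + nk, k) - a n k = n k a n k
  have hkey : (Nat.choose (1 + n * k) k : ℚ) = ((n : ℚ) * k + 1) * a n k := by
    have k1 := Nat.add_one_mul_choose_eq (n * k) k
    -- (nk+1) * C(nk, k) = C(nk+1, k+1) * (k+1)
    have k2 := Nat.choose_succ_right_eq (n * k + 1) k
    -- C(nk+1, k+1) * (k+1) = C(nk+1, k) * (nk + 1 - k)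
    have hnK : n * k = (n - 1) * k + k := by
      obtain ⟨m, rfl⟩ : ∃ m, n = m + 1 := ⟨n - 1, by omega⟩
      simp [Nat.add_sub_cancel, Nat.succ_mul]
    have e3 : n * k + 1 - k = (n - 1) * k + 1 := by omega
    rw [e3] at k2
    have comb : (n * k + 1) * Nat.choose (n * k) k
        = Nat.choose (n * k + 1) k * ((n - 1) * k + 1) := by
      rw [← k2, ← k1]
    have hD : (((n : ℚ) - 1) * k + 1) ≠ 0 := by
      have hn1 : (1 : ℚ) ≤ (n : ℚ) := by exact_mod_cast hn
      have : (0 : ℚ) ≤ ((n : ℚ) - 1) * k := mul_nonneg (by linarith) (by positivity)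
      linarith
    have combQ : ((n : ℚ) * k + 1) * (Nat.choose (n * k) k : ℚ)
        = (Nat.choose (n * k + 1) k : ℚ) * (((n : ℚ) - 1) * k + 1) := by
      have h := congrArg (fun t : ℕ => (t : ℚ)) comb
      push_cast [Nat.cast_sub hn] at h
      linear_combination h
    rw [a]
    have e4 : 1 + n * k = n * k + 1 := by ring
    rw [e4]
    rw [← mul_div_assoc, eq_div_iff hD]
    linear_combination -combQ
  simp only [Nat.sub_zero] at hB
  have : ∑ j ∈ Finset.range k, a n (k - (j + 1)) * d n (j + 1)
      = (Nat.choose (1 + n * k) k : ℚ) - a n k := by linarith [hB]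
  rw [this, hkey]
  ring

lemma main (n : ℕ) (hn : 1 ≤ n) : ∀ k, 1 ≤ k → L n k = d n k / ((n : ℚ) * k) := by
  intro k
  induction k using Nat.strong_induction_on with
  | _ k IH =>
    intro hk
    have hA := A_rec n k hk
    have hB := B_rec n k hn hk
    have hn0 : ((n : ℚ)) ≠ 0 := by
      have : (1 : ℚ) ≤ (n : ℚ) := by exact_mod_cast hn
      linarith
    have hk0 : ((k : ℚ)) ≠ 0 := by
      have : (1 : ℚ) ≤ (k : ℚ) := by exact_mod_cast hk
      linarith
    have key : ∑ j ∈ Finset.Icc 1 k, (j : ℚ) * (d n j / ((n : ℚ) * j)) * a n (k - j)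
        = (k : ℚ) * a n k := by
      have step : ∀ j ∈ Finset.Icc 1 k, (j : ℚ) * (d n j / ((n : ℚ) * j)) * a n (k - j)
          = ((n : ℚ))⁻¹ * (d n j * a n (k - j)) := by
        intro j hj
        simp only [Finset.mem_Icc] at hj
        have hj0 : ((j : ℚ)) ≠ 0 := by
          have : (1 : ℚ) ≤ (j : ℚ) := by exact_mod_cast hj.1
          linarith
        field_simp
      rw [Finset.sum_congr rfl step, ← Finset.mul_sum, hB]
      field_simp
    have diff : ∑ j ∈ Finset.Icc 1 k,
        ((j : ℚ) * L n j * a n (k - j) - (j : ℚ) * (d n j / ((n : ℚ) * j)) * a n (k - j)) = 0 := by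
      rw [Finset.sum_sub_distrib, hA, key, sub_self]
    rw [Finset.sum_eq_single_of_mem k (by simp only [Finset.mem_Icc]; omega)] at diff
    · rw [Nat.sub_self, a_zero, mul_one, mul_one] at diff
      have h2 : (k : ℚ) * (L n k - d n k / ((n : ℚ) * k)) = 0 := by linarith
      rcases mul_eq_zero.mp h2 with h | h
      · exact absurd h hk0
      · linarith
    · intro j hj hne
      simp only [Finset.mem_Icc] at hj
      rw [IH j (by omega) (by omega)]
      ring

end FussCatalanAux

/-- The identity `Σ_{p=1}^{k} ((−1)^{p+1}/p) Σ_{i₁+⋯+i_p=k} ∏_m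
binom(n·i_m, i_m)/((n−1)i_m+1) = binom(nk,k)/(nk)`, where the inner sum is over
compositions of `k` into `p` positive parts. -/
theorem fuss_catalan_log_identity (n k : ℕ) (hn : 1 ≤ n) (hk : 1 ≤ k) :
    ∑ p ∈ Finset.Icc 1 k, ((-1 : ℚ) ^ (p + 1) / p) *
      ∑ c ∈ Finset.univ.filter (fun c : Composition k => c.length = p),
        (c.blocks.map
          (fun i => (Nat.choose (n * i) i : ℚ) / (((n : ℚ) - 1) * i + 1))).prod
    = (Nat.choose (n * k) k : ℚ) / (n * k) := by
  have h := FussCatalanAux.main n hn k hk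
  exact h
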